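/- Let f : [n]^d → {0,1} and define g : [N]^d → {0,1} by g(y) = f(φ(y)) where φ : [N] → [n] is a monotone surjection whose fibers are intervals, each of size d+i or d+i+1 (with m fibers of size d+i and n−m of size d+i+1, N = m(d+i) + (n−m)(d+i+1)), applied coordinatewise. If f is ε-far from monotone then g is ε/6-far from monotone, provided N ≤ n(d+i+1) and (d+i)^d/(d+i+1)^d ≥ 1/3. -/

import Mathlib

open Classical

private lemma bool_le_true {a b : Bool} (hab : a ≤ b) (ha : a = true) : b = true := by
  subst ha; cases b
  · exact absurd hab (by simp)
  · rfl

private lemma step_lemma {d N : ℕ} (h : (Fin d → ℕ) → Bool)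
    (hmono : MonotoneOn h {y | ∀ j, y j < N})
    (B B' : Fin d → Finset ℕ) (k : Fin d)
    (hBN : ∀ j, ∀ a ∈ B j, a < N) (hB'N : ∀ b ∈ B' k, b < N)
    (heq : ∀ j, j ≠ k → B' j = B j)
    (habove : ∀ a ∈ B k, ∀ b ∈ B' k, a ≤ b) :
    ((Fintype.piFinset B).filter (fun y => h y = true)).card * (B' k).card ≤
    ((Fintype.piFinset B').filter (fun y => h y = true)).card * (B k).card := by
  classical
  rw [← Finset.card_product, ← Finset.card_product]
  apply Finset.card_le_card_of_injOn (fun p => (Function.update p.1 k p.2, p.1 k))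
  · rintro ⟨y, b⟩ hp
    simp only [Finset.mem_coe, Finset.mem_product, Finset.mem_filter, Fintype.mem_piFinset] at hp ⊢
    obtain ⟨⟨hy, hyt⟩, hb⟩ := hp
    have hyd : ∀ j, y j < N := fun j => hBN j _ (hy j)
    have hud : ∀ j, Function.update y k b j < N := by
      intro j
      rcases eq_or_ne j k with hj | hj
      · subst hj; rw [Function.update_self]; exact hB'N b hb
      · rw [Function.update_of_ne hj]; exact hyd j
    have hle : y ≤ Function.update y k b := by
      intro j
      rcases eq_or_ne j k with hj | hj
      · subst hj; rw [Function.update_self]; exact habove _ (hy j) _ hb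
      · rw [Function.update_of_ne hj]
    have hml : h y ≤ h (Function.update y k b) := hmono hyd hud hle
    refine ⟨⟨?_, bool_le_true hml hyt⟩, hy k⟩
    intro j
    rcases eq_or_ne j k with hj | hj
    · subst hj; rw [Function.update_self]; exact hb
    · rw [Function.update_of_ne hj, heq j hj]; exact hy j
  · rintro ⟨y, b⟩ hp ⟨z, c⟩ hq hpq
    simp only [Prod.mk.injEq] at hpq
    obtain ⟨h1, h2⟩ := hpq
    have hyz : y = z := by
      funext j
      rcases eq_or_ne j k with hj | hj
      · subst hj; exact h2
      · have := congrFun h1 j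
        rwa [Function.update_of_ne hj, Function.update_of_ne hj] at this
    subst hyz
    have hbc : b = c := by
      have := congrFun h1 k
      rwa [Function.update_self, Function.update_self] at this
    rw [hbc]


private lemma step_full {d N : ℕ} (h : (Fin d → ℕ) → Bool)
    (hmono : MonotoneOn h {y | ∀ j, y j < N})
    (B B' : Fin d → Finset ℕ) (k : Fin d)
    (hBN : ∀ j, ∀ a ∈ B j, a < N) (hB'N : ∀ b ∈ B' k, b < N)
    (heq : ∀ j, j ≠ k → B' j = B j)
    (habove : ∀ a ∈ B k, ∀ b ∈ B' k, a ≤ b) :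
    ((Fintype.piFinset B).filter (fun y => h y = true)).card * (Fintype.piFinset B').card ≤
    ((Fintype.piFinset B').filter (fun y => h y = true)).card * (Fintype.piFinset B).card := by
  classical
  have hstep := step_lemma h hmono B B' k hBN hB'N heq habove
  have hR : ∏ j ∈ Finset.univ.erase k, (B' j).card = ∏ j ∈ Finset.univ.erase k, (B j).card :=
    Finset.prod_congr rfl (fun j hj => by rw [heq j (Finset.ne_of_mem_erase hj)])
  rw [Fintype.card_piFinset, Fintype.card_piFinset,
      ← Finset.mul_prod_erase Finset.univ (fun j => (B' j).card) (Finset.mem_univ k),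
      ← Finset.mul_prod_erase Finset.univ (fun j => (B j).card) (Finset.mem_univ k), hR,
      ← mul_assoc, ← mul_assoc]
  exact Nat.mul_le_mul hstep (le_refl _)

open Classical in
theorem stmt_16 (n N d i m : ℕ) (hd : 1 ≤ d) (hn : 1 ≤ n) (hm : m ≤ n)
    (hN : N = m * (d + i) + (n - m) * (d + i + 1))
    (φ : ℕ → ℕ)
    (hφmono : MonotoneOn φ (Set.Iio N))
    (hφmaps : ∀ y < N, φ y < n)
    (hφsurj : ∀ x < n, ∃ y < N, φ y = x)
    (hfib : ∀ x < n, ((Finset.range N).filter fun y => φ y = x).card = d + i ∨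
      ((Finset.range N).filter fun y => φ y = x).card = d + i + 1)
    (hcount : ((Finset.range n).filter fun x =>
      ((Finset.range N).filter fun y => φ y = x).card = d + i).card = m)
    (hNle : N ≤ n * (d + i + 1))
    (hratio : (1 : ℝ) / 3 ≤ ((d + i : ℝ) / (d + i + 1)) ^ d)
    (f : (Fin d → ℕ) → Bool) (ε : ℝ)
    (hfar : ∀ h : (Fin d → ℕ) → Bool, MonotoneOn h {x | ∀ j, x j < n} →
      ε * (n : ℝ) ^ d ≤ (((Fintype.piFinset fun _ : Fin d => Finset.range n).filter
        fun x => f x ≠ h x).card : ℝ)) :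
    ∀ h : (Fin d → ℕ) → Bool, MonotoneOn h {y | ∀ j, y j < N} →
      ε / 6 * (N : ℝ) ^ d ≤ (((Fintype.piFinset fun _ : Fin d => Finset.range N).filter
        fun y => f (fun j => φ (y j)) ≠ h y).card : ℝ) := by
  intro h hmono
  classical
  -- 1-d fibers
  set I : ℕ → Finset ℕ := fun a => (Finset.range N).filter (fun y => φ y = a) with hI
  have hIN : ∀ a, ∀ y ∈ I a, y < N := by
    intro a y hy
    rw [hI, Finset.mem_filter, Finset.mem_range] at hy
    exact hy.1
  have hIphi : ∀ a, ∀ y ∈ I a, φ y = a := by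
    intro a y hy
    rw [hI, Finset.mem_filter] at hy
    exact hy.2
  have hIcard : ∀ a, a < n → d + i ≤ (I a).card := by
    intro a ha
    show d + i ≤ ((Finset.range N).filter fun y => φ y = a).card
    rcases hfib a ha with h1 | h1 <;> omega
  have hIabove : ∀ a b : ℕ, a < b → ∀ y ∈ I a, ∀ z ∈ I b, y ≤ z := by
    intro a b hab y hy z hz
    by_contra hyz
    push_neg at hyz
    have hm := hφmono (Set.mem_Iio.2 (hIN b z hz)) (Set.mem_Iio.2 (hIN a y hy)) hyz.le
    rw [hIphi a y hy, hIphi b z hz] at hm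
    omega
  -- d-dim fibers
  set F : (Fin d → ℕ) → Finset (Fin d → ℕ) := fun x => Fintype.piFinset (fun j => I (x j)) with hF
  set P : (Fin d → ℕ) → ℕ := fun x => ((F x).filter (fun y => h y = true)).card with hP
  have hFmem : ∀ x y : Fin d → ℕ, y ∈ F x ↔ ∀ j, y j ∈ I (x j) := by
    intro x y; rw [hF]; exact Fintype.mem_piFinset
  have hScard : ∀ x : Fin d → ℕ, (∀ j, x j < n) → (d + i) ^ d ≤ (F x).card := by
    intro x hx
    rw [hF]
    rw [Fintype.card_piFinset]
    calc (d + i) ^ d = ∏ _j : Fin d, (d + i) := by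
          rw [Finset.prod_const, Finset.card_univ, Fintype.card_fin]
      _ ≤ ∏ j : Fin d, (I (x j)).card :=
          Finset.prod_le_prod (fun _ _ => Nat.zero_le _) (fun j _ => hIcard _ (hx j))
  have hSpos : ∀ x : Fin d → ℕ, (∀ j, x j < n) → 1 ≤ (F x).card := by
    intro x hx
    exact le_trans (Nat.one_le_pow d (d + i) (by omega)) (hScard x hx)
  -- fraction chain
  have hchain : ∀ x x' : Fin d → ℕ, (∀ j, x j < n) → (∀ j, x' j < n) → x ≤ x' →
      P x * (F x').card ≤ P x' * (F x).card := by
    intro x x' hx hx' hle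
    have key : ∀ t, t ≤ d → P x * (F (fun j => if (j : ℕ) < t then x' j else x j)).card ≤
        P (fun j => if (j : ℕ) < t then x' j else x j) * (F x).card := by
      intro t
      induction t with
      | zero =>
        intro _
        have hx0 : (fun j : Fin d => if (j : ℕ) < 0 then x' j else x j) = x :=
          funext fun j => if_neg (by omega)
        rw [hx0]
      | succ t ih =>
        intro ht
        have ihh := ih (Nat.le_of_succ_le ht)
        have htd : t < d := ht
        set k : Fin d := ⟨t, htd⟩ with hk
        set xt : Fin d → ℕ := fun j => if (j : ℕ) < t then x' j else x j with hxt
        set xt1 : Fin d → ℕ := fun j => if (j : ℕ) < t + 1 then x' j else x j with hxt1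
        have hxtlt : ∀ j, xt j < n := by
          intro j; rw [hxt]; dsimp only
          split
          · exact hx' j
          · exact hx j
        have hxt1lt : ∀ j, xt1 j < n := by
          intro j; rw [hxt1]; dsimp only
          split
          · exact hx' j
          · exact hx j
        have hxtk : xt k = x k := by rw [hxt]; exact if_neg (by simp [hk])
        have hxt1k : xt1 k = x' k := by rw [hxt1]; exact if_pos (by simp [hk])
        have hagree : ∀ j, j ≠ k → xt1 j = xt j := by
          intro j hj
          have hjk : (j : ℕ) ≠ t := fun hc => hj (Fin.ext (by simp [hk, hc]))
          rw [hxt, hxt1]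
          dsimp only
          by_cases hlt : (j : ℕ) < t
          · rw [if_pos hlt, if_pos (by omega)]
          · rw [if_neg hlt, if_neg (by omega)]
        have hstep : P xt * (F xt1).card ≤ P xt1 * (F xt).card := by
          rcases eq_or_lt_of_le (show x k ≤ x' k from hle k) with heqk | hltk
          · have hxteq : xt1 = xt := by
              funext j
              rcases eq_or_ne j k with hj | hj
              · rw [hj, hxtk, hxt1k, heqk]
              · exact hagree j hj
            rw [hxteq]
          · have hsf := step_full h hmono (fun j => I (xt j)) (fun j => I (xt1 j)) k
              (fun j a ha => hIN _ a ha) (fun b hb => hIN _ b hb)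
              (fun j hj => by show I (xt1 j) = I (xt j); rw [hagree j hj])
              (by
                intro a ha b hb
                have ha' : a ∈ I (xt k) := ha
                have hb' : b ∈ I (xt1 k) := hb
                rw [hxtk] at ha'
                rw [hxt1k] at hb'
                exact hIabove _ _ hltk a ha' b hb')
            exact hsf
        have hpos : 0 < (F xt).card := hSpos xt hxtlt
        have h1 : P x * (F xt1).card * (F xt).card ≤ P xt1 * (F x).card * (F xt).card := by
          calc P x * (F xt1).card * (F xt).card
              = P x * (F xt).card * (F xt1).card := by ring
            _ ≤ P xt * (F x).card * (F xt1).card :=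
                Nat.mul_le_mul ihh (le_refl _)
            _ = P xt * (F xt1).card * (F x).card := by ring
            _ ≤ P xt1 * (F xt).card * (F x).card :=
                Nat.mul_le_mul hstep (le_refl _)
            _ = P xt1 * (F x).card * (F xt).card := by ring
        exact Nat.le_of_mul_le_mul_right h1 hpos
    have hxd : (fun j : Fin d => if (j : ℕ) < d then x' j else x j) = x' :=
      funext fun j => if_pos j.isLt
    have := key d (le_refl d)
    rwa [hxd] at this
  -- the majority function
  set h' : (Fin d → ℕ) → Bool := fun x => decide ((F x).card ≤ 2 * P x) with hh'
  have hmono' : MonotoneOn h' {x | ∀ j, x j < n} := by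
    intro x hx x' hx' hle
    show h' x ≤ h' x'
    rw [hh']
    dsimp only
    by_cases hc : (F x).card ≤ 2 * P x
    · have hc' : (F x').card ≤ 2 * P x' := by
        have hch := hchain x x' hx hx' hle
        have hpos : 0 < (F x).card := hSpos x hx
        have hkey : (F x').card * (F x).card ≤ 2 * P x' * (F x).card := by
          calc (F x').card * (F x).card
              = (F x).card * (F x').card := by ring
            _ ≤ 2 * P x * (F x').card := Nat.mul_le_mul hc (le_refl _)
            _ = 2 * (P x * (F x').card) := by ring
            _ ≤ 2 * (P x' * (F x).card) := Nat.mul_le_mul (le_refl 2) hch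
            _ = 2 * P x' * (F x).card := by ring
        exact Nat.le_of_mul_le_mul_right hkey hpos
      rw [decide_eq_true hc, decide_eq_true hc']
    · rw [decide_eq_false hc]
      exact Bool.false_le _
  -- mismatch sets
  have hfarM := hfar h' hmono'
  set Mf := (Fintype.piFinset fun _ : Fin d => Finset.range n).filter (fun x => f x ≠ h' x) with hMfdef
  set G := (Fintype.piFinset fun _ : Fin d => Finset.range N).filter
      (fun y => f (fun j => φ (y j)) ≠ h y) with hGdef
  have hsub : Mf.biUnion (fun x => (F x).filter (fun y => h y ≠ f x)) ⊆ G := by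
    intro y hy
    rw [Finset.mem_biUnion] at hy
    obtain ⟨x, hxM, hyF⟩ := hy
    rw [Finset.mem_filter] at hyF
    obtain ⟨hyF, hyne⟩ := hyF
    have hphix : (fun j => φ (y j)) = x :=
      funext fun j => hIphi _ _ ((hFmem x y).1 hyF j)
    rw [hGdef, Finset.mem_filter]
    constructor
    · rw [Fintype.mem_piFinset]
      intro j
      rw [Finset.mem_range]
      exact hIN _ _ ((hFmem x y).1 hyF j)
    · rw [hphix]
      exact hyne.symm
  have hdisj : ∀ x ∈ Mf, ∀ x' ∈ Mf, x ≠ x' →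
      Disjoint ((F x).filter fun y => h y ≠ f x) ((F x').filter fun y => h y ≠ f x') := by
    intro x _ x' _ hne
    rw [Finset.disjoint_left]
    intro y hy hy'
    apply hne
    funext j
    rw [← hIphi _ _ ((hFmem x y).1 (Finset.mem_filter.1 hy).1 j),
        ← hIphi _ _ ((hFmem x' y).1 (Finset.mem_filter.1 hy').1 j)]
  have hcardsum : ∑ x ∈ Mf, ((F x).filter fun y => h y ≠ f x).card ≤ G.card := by
    rw [← Finset.card_biUnion hdisj]
    exact Finset.card_le_card hsub
  -- per-x lower bound
  have hper : ∀ x ∈ Mf, (d + i) ^ d ≤ 2 * ((F x).filter fun y => h y ≠ f x).card := by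
    intro x hxM
    rw [hMfdef, Finset.mem_filter] at hxM
    obtain ⟨hxmem, hxne⟩ := hxM
    have hxlt : ∀ j, x j < n := by
      rw [Fintype.mem_piFinset] at hxmem
      intro j
      have := hxmem j
      rwa [Finset.mem_range] at this
    have hSx := hScard x hxlt
    cases hfx : f x with
    | false =>
      have hx' : h' x = true := by
        rw [hfx] at hxne
        cases hhx : h' x
        · rw [hhx] at hxne; exact absurd rfl hxne
        · rfl
      rw [hh'] at hx'
      have hc : (F x).card ≤ 2 * P x := of_decide_eq_true hx'
      have hmeq : ((F x).filter fun y => h y ≠ false).card = P x := by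
        show _ = ((F x).filter (fun y => h y = true)).card
        congr 1
        apply Finset.filter_congr
        intro y _
        simp
      omega
    | true =>
      have hx' : h' x = false := by
        rw [hfx] at hxne
        cases hhx : h' x
        · rfl
        · rw [hhx] at hxne; exact absurd rfl hxne
      rw [hh'] at hx'
      have hc : ¬ ((F x).card ≤ 2 * P x) := of_decide_eq_false hx'
      have hsplit : P x + ((F x).filter fun y => h y ≠ true).card = (F x).card := by
        show ((F x).filter (fun y => h y = true)).card + _ = _
        exact Finset.card_filter_add_card_filter_not (fun y => h y = true)
      omega
  -- sum up in ℕ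
  have hsum2 : Mf.card * (d + i) ^ d ≤ 2 * G.card := by
    calc Mf.card * (d + i) ^ d = ∑ _x ∈ Mf, (d + i) ^ d := by
          rw [Finset.sum_const, smul_eq_mul, mul_comm]
      _ ≤ ∑ x ∈ Mf, 2 * ((F x).filter fun y => h y ≠ f x).card := Finset.sum_le_sum hper
      _ = 2 * ∑ x ∈ Mf, ((F x).filter fun y => h y ≠ f x).card := by rw [Finset.mul_sum]
      _ ≤ 2 * G.card := Nat.mul_le_mul (le_refl 2) hcardsum
  -- move to ℝ
  have hsum2' : (Mf.card : ℝ) * ((d : ℝ) + i) ^ d ≤ 2 * (G.card : ℝ) := by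
    exact_mod_cast hsum2
  have hBp : (0 : ℝ) < ((d : ℝ) + i + 1) ^ d := by positivity
  have hA3 : ((d : ℝ) + i + 1) ^ d ≤ 3 * ((d : ℝ) + i) ^ d := by
    rw [div_pow] at hratio
    have := (le_div_iff₀ hBp).1 hratio
    linarith
  have hNB : (N : ℝ) ^ d ≤ (n : ℝ) ^ d * ((d : ℝ) + i + 1) ^ d := by
    have h1 : (N : ℝ) ≤ (n : ℝ) * ((d : ℝ) + i + 1) := by exact_mod_cast hNle
    calc (N : ℝ) ^ d ≤ ((n : ℝ) * ((d : ℝ) + i + 1)) ^ d :=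
        pow_le_pow_left₀ (Nat.cast_nonneg N) h1 d
      _ = (n : ℝ) ^ d * ((d : ℝ) + i + 1) ^ d := mul_pow _ _ _
  have hApos : (0 : ℝ) ≤ ((d : ℝ) + i) ^ d := by positivity
  have hnpos : (0 : ℝ) ≤ (n : ℝ) ^ d := by positivity
  rcases le_or_gt 0 ε with hε | hε
  · have e1 : ε / 6 * (N : ℝ) ^ d ≤ ε / 6 * ((n : ℝ) ^ d * ((d : ℝ) + i + 1) ^ d) :=
      mul_le_mul_of_nonneg_left hNB (by linarith)
    have e2 : ε * (n : ℝ) ^ d * ((d : ℝ) + i + 1) ^ d ≤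
        ε * (n : ℝ) ^ d * (3 * ((d : ℝ) + i) ^ d) :=
      mul_le_mul_of_nonneg_left hA3 (mul_nonneg hε hnpos)
    have e3 : ε * (n : ℝ) ^ d * ((d : ℝ) + i) ^ d ≤ (Mf.card : ℝ) * ((d : ℝ) + i) ^ d :=
      mul_le_mul_of_nonneg_right hfarM hApos
    linarith
  · have hnN : n ≤ N := by
      have h1 : m * 1 ≤ m * (d + i) := Nat.mul_le_mul (le_refl m) (by omega)
      have h2 : (n - m) * 1 ≤ (n - m) * (d + i + 1) := Nat.mul_le_mul (le_refl _) (by omega)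
      omega
    have hN1 : 1 ≤ N := le_trans hn hnN
    have hNpos : (0 : ℝ) < (N : ℝ) ^ d := by
      apply pow_pos
      exact_mod_cast Nat.lt_of_lt_of_le Nat.zero_lt_one hN1
    have hneg : ε / 6 * (N : ℝ) ^ d ≤ 0 :=
      le_of_lt (mul_neg_of_neg_of_pos (by linarith) hNpos)
    exact le_trans hneg (Nat.cast_nonneg _)
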